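/- Let M > 0, 0 ≤ a < M, Δ(r) = r² − 2Mr + a², r₊ = M + √(M² − a²), and V₁(r) = Δ(3r² − 4Mr + a²)/(r² + a²)³ − 3Δ²r²/(r² + a²)⁴. Then the derivative of V₁ at the horizon satisfies (dV₁/dr)(r₊) = 4Mr₊(r₊ − M)(r₊² − a²)/(r₊² + a²)⁴, and this quantity is strictly positive. -/

import Mathlib

/-- The derivative of the frequency-independent part V₁ of the Kerr potential
at the horizon equals `4Mr₊(r₊ − M)(r₊² − a²)/(r₊² + a²)⁴` and is strictly positive. -/
theorem stmt_2 (M a : ℝ) (hM : 0 < M) (ha : 0 ≤ a) (haM : a < M)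
    (rp : ℝ) (hrp : rp = M + Real.sqrt (M ^ 2 - a ^ 2))
    (Δ V₁ : ℝ → ℝ) (hΔ : ∀ r, Δ r = r ^ 2 - 2 * M * r + a ^ 2)
    (hV₁ : ∀ r, V₁ r = Δ r * (3 * r ^ 2 - 4 * M * r + a ^ 2) / (r ^ 2 + a ^ 2) ^ 3
        - 3 * (Δ r) ^ 2 * r ^ 2 / (r ^ 2 + a ^ 2) ^ 4) :
    HasDerivAt V₁ (4 * M * rp * (rp - M) * (rp ^ 2 - a ^ 2) / (rp ^ 2 + a ^ 2) ^ 4) rp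
    ∧ 0 < 4 * M * rp * (rp - M) * (rp ^ 2 - a ^ 2) / (rp ^ 2 + a ^ 2) ^ 4 := by
  have hMa2 : (0:ℝ) ≤ M ^ 2 - a ^ 2 := by nlinarith
  have hs : Real.sqrt (M ^ 2 - a ^ 2) ^ 2 = M ^ 2 - a ^ 2 := Real.sq_sqrt hMa2
  have hspos : 0 < Real.sqrt (M ^ 2 - a ^ 2) := Real.sqrt_pos.mpr (by nlinarith)
  have hrpM : M < rp := by rw [hrp]; linarith
  have hrppos : 0 < rp := lt_trans hM hrpM
  have harp : a < rp := lt_trans haM hrpM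
  have hΔrp : rp ^ 2 - 2 * M * rp + a ^ 2 = 0 := by
    rw [hrp]; nlinarith [hs]
  have hppos : 0 < rp ^ 2 + a ^ 2 := by positivity
  have hpne : rp ^ 2 + a ^ 2 ≠ 0 := ne_of_gt hppos
  have hVeq : V₁ = fun r => (r ^ 2 - 2 * M * r + a ^ 2) * (3 * r ^ 2 - 4 * M * r + a ^ 2)
      / (r ^ 2 + a ^ 2) ^ 3
      - 3 * (r ^ 2 - 2 * M * r + a ^ 2) ^ 2 * r ^ 2 / (r ^ 2 + a ^ 2) ^ 4 := by
    funext r; rw [hV₁ r, hΔ r]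
  have h1 : HasDerivAt (fun r : ℝ => r ^ 2 - 2 * M * r + a ^ 2) (2 * rp - 2 * M) rp := by
    have := ((hasDerivAt_pow 2 rp).sub ((hasDerivAt_id rp).const_mul (2 * M))).add_const (a ^ 2)
    exact this.congr_deriv (by ring)
  have h2 : HasDerivAt (fun r : ℝ => 3 * r ^ 2 - 4 * M * r + a ^ 2) (6 * rp - 4 * M) rp := by
    have := (((hasDerivAt_pow 2 rp).const_mul 3).sub
      ((hasDerivAt_id rp).const_mul (4 * M))).add_const (a ^ 2)
    exact this.congr_deriv (by ring)
  have hp : HasDerivAt (fun r : ℝ => r ^ 2 + a ^ 2) (2 * rp) rp := by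
    have := (hasDerivAt_pow 2 rp).add_const (a ^ 2)
    exact this.congr_deriv (by ring)
  have hp3 : HasDerivAt (fun r : ℝ => (r ^ 2 + a ^ 2) ^ 3)
      ((3 : ℕ) * (rp ^ 2 + a ^ 2) ^ 2 * (2 * rp)) rp := hp.pow 3
  have hp4 : HasDerivAt (fun r : ℝ => (r ^ 2 + a ^ 2) ^ 4)
      ((4 : ℕ) * (rp ^ 2 + a ^ 2) ^ 3 * (2 * rp)) rp := hp.pow 4
  have hn1 : HasDerivAt (fun r : ℝ => (r ^ 2 - 2 * M * r + a ^ 2) * (3 * r ^ 2 - 4 * M * r + a ^ 2))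
      ((2 * rp - 2 * M) * (3 * rp ^ 2 - 4 * M * rp + a ^ 2)
        + (rp ^ 2 - 2 * M * rp + a ^ 2) * (6 * rp - 4 * M)) rp := h1.mul h2
  have hn2 : HasDerivAt (fun r : ℝ => 3 * (r ^ 2 - 2 * M * r + a ^ 2) ^ 2 * r ^ 2)
      ((3 * ((2 : ℕ) * (rp ^ 2 - 2 * M * rp + a ^ 2) ^ 1 * (2 * rp - 2 * M))) * rp ^ 2
        + 3 * (rp ^ 2 - 2 * M * rp + a ^ 2) ^ 2 * (2 * rp)) rp := by
    have := (((h1.pow 2).const_mul 3).mul (hasDerivAt_pow 2 rp))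
    exact this.congr_deriv (by simp only [Pi.pow_apply]; ring)
  have hd : HasDerivAt V₁
      ((((2 * rp - 2 * M) * (3 * rp ^ 2 - 4 * M * rp + a ^ 2)
        + (rp ^ 2 - 2 * M * rp + a ^ 2) * (6 * rp - 4 * M)) * (rp ^ 2 + a ^ 2) ^ 3
        - (rp ^ 2 - 2 * M * rp + a ^ 2) * (3 * rp ^ 2 - 4 * M * rp + a ^ 2)
          * ((3 : ℕ) * (rp ^ 2 + a ^ 2) ^ 2 * (2 * rp))) / ((rp ^ 2 + a ^ 2) ^ 3) ^ 2
      - (((3 * ((2 : ℕ) * (rp ^ 2 - 2 * M * rp + a ^ 2) ^ 1 * (2 * rp - 2 * M))) * rp ^ 2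
        + 3 * (rp ^ 2 - 2 * M * rp + a ^ 2) ^ 2 * (2 * rp)) * (rp ^ 2 + a ^ 2) ^ 4
        - 3 * (rp ^ 2 - 2 * M * rp + a ^ 2) ^ 2 * rp ^ 2
          * ((4 : ℕ) * (rp ^ 2 + a ^ 2) ^ 3 * (2 * rp))) / ((rp ^ 2 + a ^ 2) ^ 4) ^ 2) rp := by
    rw [hVeq]
    exact (hn1.div hp3 (pow_ne_zero 3 hpne)).sub (hn2.div hp4 (pow_ne_zero 4 hpne))
  have heq : (((2 * rp - 2 * M) * (3 * rp ^ 2 - 4 * M * rp + a ^ 2)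
        + (rp ^ 2 - 2 * M * rp + a ^ 2) * (6 * rp - 4 * M)) * (rp ^ 2 + a ^ 2) ^ 3
        - (rp ^ 2 - 2 * M * rp + a ^ 2) * (3 * rp ^ 2 - 4 * M * rp + a ^ 2)
          * ((3 : ℕ) * (rp ^ 2 + a ^ 2) ^ 2 * (2 * rp))) / ((rp ^ 2 + a ^ 2) ^ 3) ^ 2
      - (((3 * ((2 : ℕ) * (rp ^ 2 - 2 * M * rp + a ^ 2) ^ 1 * (2 * rp - 2 * M))) * rp ^ 2
        + 3 * (rp ^ 2 - 2 * M * rp + a ^ 2) ^ 2 * (2 * rp)) * (rp ^ 2 + a ^ 2) ^ 4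
        - 3 * (rp ^ 2 - 2 * M * rp + a ^ 2) ^ 2 * rp ^ 2
          * ((4 : ℕ) * (rp ^ 2 + a ^ 2) ^ 3 * (2 * rp))) / ((rp ^ 2 + a ^ 2) ^ 4) ^ 2
      = 4 * M * rp * (rp - M) * (rp ^ 2 - a ^ 2) / (rp ^ 2 + a ^ 2) ^ 4 := by
    have ha2 : a ^ 2 = 2 * M * rp - rp ^ 2 := by linarith [hΔrp]
    rw [hΔrp, ha2]
    have hpne' : 2 * M * rp ≠ 0 := by positivity
    push_cast
    field_simp
    ring
  constructor
  · rw [← heq]; exact hd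
  · have h1 : 0 < rp - M := by linarith
    have h2 : 0 < rp ^ 2 - a ^ 2 := by nlinarith
    positivity
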